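/- Let f ∈ R{x̄}_{D*} \ R with leader u_f and separant s_f, and let δ_{i,j} be one of the derivation-type operators (not an associated endomorphism). Then rk(δ_{i,j}(f) − σᵢ(s_f)·δ_{i,j}(u_f)) < rk(δ_{i,j}(u_f)); i.e., δ_{i,j}(f) = σᵢ(s_f)·δ_{i,j}(u_f) + h where every variable of h is strictly below δ_{i,j}(u_f) in the ranking. -/

import Mathlib

open MvPolynomial
open scoped BigOperators

/-- The variables `dᶿxⱼ` of the `D*`-polynomial ring in `n` indeterminates with `M`
operators: a pair (index of `x`, multi-exponent `θ ∈ ℕ^M`). -/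
abbrev DVar (n M : ℕ) : Type := Fin n × (Fin M → ℕ)

/-- Applying the composite operator with multi-exponent `φ` to a variable. -/
def shiftVar {n M : ℕ} (u : DVar n M) (φ : Fin M → ℕ) : DVar n M :=
  (u.1, fun l => u.2 l + φ l)

/-- `φ` encodes a composition of the associated endomorphisms only (a `σ`-transform). -/
def IsSigmaExp {M : ℕ} (σset : Finset (Fin M)) (φ : Fin M → ℕ) : Prop :=
  ∀ k, φ k ≠ 0 → k ∈ σset

/-- `φ` encodes a composition of operators involving at least one derivation-type
operator (a `δ`-transform). -/
def IsDeltaExp {M : ℕ} (σset : Finset (Fin M)) (φ : Fin M → ℕ) : Prop :=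
  ∃ k, k ∉ σset ∧ φ k ≠ 0

/-- `u` is the leader of `f`: the highest-ranked variable occurring in `f`. -/
def IsLeader {R : Type} [CommRing R] {n M : ℕ} (lt : DVar n M → DVar n M → Prop)
    (f : MvPolynomial (DVar n M) R) (u : DVar n M) : Prop :=
  u ∈ f.vars ∧ ∀ v ∈ f.vars, v ≠ u → lt v u

/-- `f` lies in (the image of) `R`, i.e. is a constant polynomial. -/
def IsConst {R : Type} [CommRing R] {n M : ℕ} (f : MvPolynomial (DVar n M) R) : Prop :=
  ∃ r : R, f = C r

/-- `g` is reduced with respect to `f`: `g` contains no `δ`-transform of the leader of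
`f`, and every `σ`-transform of the leader of `f` occurs in `g` with degree `< deg f`. -/
def ReducedWrt {R : Type} [CommRing R] {n M : ℕ} (lt : DVar n M → DVar n M → Prop)
    (σset : Finset (Fin M)) (g f : MvPolynomial (DVar n M) R) : Prop :=
  ∀ u : DVar n M, IsLeader lt f u →
    (∀ φ : Fin M → ℕ, IsDeltaExp σset φ → shiftVar u φ ∉ g.vars) ∧
    (∀ φ : Fin M → ℕ, IsSigmaExp σset φ →
      degreeOf (shiftVar u φ) g < degreeOf u f)

/-- `g` is reduced with respect to every element of `A`. -/
def ReducedWrtSet {R : Type} [CommRing R] {n M : ℕ} (lt : DVar n M → DVar n M → Prop)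
    (σset : Finset (Fin M)) (g : MvPolynomial (DVar n M) R)
    (A : Set (MvPolynomial (DVar n M) R)) : Prop :=
  ∀ f ∈ A, ReducedWrt lt σset g f

/-- `A` is autoreduced: no element is constant and any two distinct elements are reduced
with respect to each other. -/
def Autoreduced {R : Type} [CommRing R] {n M : ℕ} (lt : DVar n M → DVar n M → Prop)
    (σset : Finset (Fin M)) (A : Set (MvPolynomial (DVar n M) R)) : Prop :=
  (∀ f ∈ A, ¬ IsConst f) ∧
  ∀ f ∈ A, ∀ g ∈ A, f ≠ g → ReducedWrt lt σset g f

/-- `rk f < rk g`: the leader of `f` is below that of `g`, or they coincide and the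
leading degree of `f` is smaller. -/
def RkLt {R : Type} [CommRing R] {n M : ℕ} (lt : DVar n M → DVar n M → Prop)
    (f g : MvPolynomial (DVar n M) R) : Prop :=
  ∃ uf ug, IsLeader lt f uf ∧ IsLeader lt g ug ∧
    (lt uf ug ∨ (uf = ug ∧ degreeOf uf f < degreeOf ug g))

/-- `rk f = rk g`: same leader and same leading degree. -/
def RkEq {R : Type} [CommRing R] {n M : ℕ} (lt : DVar n M → DVar n M → Prop)
    (f g : MvPolynomial (DVar n M) R) : Prop :=
  ∃ uf ug, IsLeader lt f uf ∧ IsLeader lt g ug ∧ uf = ug ∧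
    degreeOf uf f = degreeOf ug g

/-- `rk f ≤ rk g` (with constants of lowest rank). -/
def RkLe {R : Type} [CommRing R] {n M : ℕ} (lt : DVar n M → DVar n M → Prop)
    (f g : MvPolynomial (DVar n M) R) : Prop :=
  IsConst f ∨ RkLt lt f g ∨ RkEq lt f g

/-- `lt` is a ranking of the variables, with `σ`-operators `σset` and operator ranks `ν`. -/
structure IsRanking {n M : ℕ} (lt : DVar n M → DVar n M → Prop)
    (σset : Finset (Fin M)) (ν : Fin M → ℕ) : Prop where
  trichot : ∀ u v, lt u v ∨ u = v ∨ lt v u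
  irrefl : ∀ u, ¬ lt u u
  trans : ∀ u v w, lt u v → lt v w → lt u w
  wf : WellFounded lt
  lt_op : ∀ (u : DVar n M) (k : Fin M), lt u (shiftVar u (Pi.single k 1))
  mono : ∀ (u v : DVar n M) (k : Fin M), lt u v →
    lt (shiftVar u (Pi.single k 1)) (shiftVar v (Pi.single k 1))
  op_ord : ∀ (u : DVar n M) (k k' : Fin M), ν k < ν k' →
    lt (shiftVar u (Pi.single k 1)) (shiftVar u (Pi.single k' 1))
  nu_sigma : ∀ k ∈ σset, ν k = 0

/-- The coordinate operators of a `D*`-ring structure (with respect to a ranked basis of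
`D`) on a commutative `K`-algebra `A`: operators `δ k`, the subset `σset` of associated
endomorphisms, the map `fac` sending each operator to the associated endomorphism of its
local factor, operator ranks `ν`, and structure constants `α`, subject to additivity,
`K`-linearity, pairwise commutativity, multiplicativity and injectivity of the associated
endomorphisms, and the twisted Leibniz rule of the ranked basis. -/
structure DStarOps (K : Type) [Field K] (A : Type) [CommRing A] [Algebra K A]
    (M : ℕ) where
  δ : Fin M → A → A
  σset : Finset (Fin M)
  fac : Fin M → Fin M
  ν : Fin M → ℕ
  α : Fin M → Fin M → Fin M → K
  map_add : ∀ (k : Fin M) (a b : A), δ k (a + b) = δ k a + δ k b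
  map_smul : ∀ (k : Fin M) (c : K) (a : A), δ k (c • a) = c • δ k a
  comm : ∀ (k l : Fin M) (a : A), δ k (δ l a) = δ l (δ k a)
  fac_mem : ∀ k, fac k ∈ σset
  fac_sigma : ∀ k ∈ σset, fac k = k
  sigma_one : ∀ k ∈ σset, δ k 1 = 1
  sigma_mul : ∀ k ∈ σset, ∀ a b : A, δ k (a * b) = δ k a * δ k b
  sigma_inj : ∀ k ∈ σset, Function.Injective (δ k)
  nu_sigma : ∀ k ∈ σset, ν k = 0
  nu_delta : ∀ k ∉ σset, 1 ≤ ν k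
  prod_rule : ∀ k ∉ σset, ∀ a b : A,
    δ k (a * b) = δ k a * δ (fac k) b + δ (fac k) a * δ k b +
      ∑ pq ∈ Finset.univ.filter
          (fun pq : Fin M × Fin M =>
            pq.1 ∉ σset ∧ pq.2 ∉ σset ∧ fac pq.1 = fac k ∧ fac pq.2 = fac k ∧
              ν pq.1 + ν pq.2 ≤ ν k),
        α k pq.1 pq.2 • (δ pq.1 a * δ pq.2 b)

variable {K : Type} [Field K] {A : Type} [CommRing A] [Algebra K A] {M : ℕ}

/-- Applying a composite of the operators along a list of indices. -/
def applyWord (op : DStarOps K A M) (w : List (Fin M)) (a : A) : A :=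
  w.foldr (fun k x => op.δ k x) a

/-- `b` is a `σ`-transform of `a`: the image of `a` under a composition of the
associated endomorphisms. -/
def IsSigmaTransform (op : DStarOps K A M) (a b : A) : Prop :=
  ∃ w : List (Fin M), (∀ k ∈ w, k ∈ op.σset) ∧ b = applyWord op w a

/-- An ideal closed under all the operators (a `D`-ideal). -/
def IsDIdeal (op : DStarOps K A M) (I : Ideal A) : Prop :=
  ∀ k : Fin M, ∀ a ∈ I, op.δ k a ∈ I

/-- A reflexive ideal: `a·σᵢ(a) ∈ I` implies `a ∈ I`. -/
def IsReflexive (op : DStarOps K A M) (I : Ideal A) : Prop :=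
  ∀ k ∈ op.σset, ∀ a : A, a * op.δ k a ∈ I → a ∈ I

/-- A perfect `D`-ideal: a radical, reflexive `D`-ideal. -/
def IsPerfectDIdeal (op : DStarOps K A M) (I : Ideal A) : Prop :=
  IsDIdeal op I ∧ IsReflexive op I ∧ I.IsRadical

/-- Membership in the `D`-ideal `[S]_D` generated by `S`. -/
def InDIdealGen (op : DStarOps K A M) (S : Set A) (a : A) : Prop :=
  ∀ I : Ideal A, S ⊆ I → IsDIdeal op I → a ∈ I

/-- Membership in the reflexive `D`-ideal `⟨S⟩_D` generated by `S`. -/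
def InReflexiveDIdealGen (op : DStarOps K A M) (S : Set A) (a : A) : Prop :=
  ∀ I : Ideal A, S ⊆ I → IsDIdeal op I → IsReflexive op I → a ∈ I


section SepAux

open MvPolynomial

variable {R : Type} [CommRing R] {n M : ℕ}

lemma sep_vars_monomial_subset (d : (DVar n M) →₀ ℕ) (r : R) :
    (monomial d r).vars ⊆ d.support := by
  by_cases h : r = 0
  · simp [h, vars_0]
  · rw [vars_monomial h]

lemma sep_vars_X_subset (u : DVar n M) :
    (X u : MvPolynomial (DVar n M) R).vars ⊆ {u} := by
  have : (X u : MvPolynomial (DVar n M) R) = monomial (Finsupp.single u 1) 1 := rfl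
  rw [this]
  refine (sep_vars_monomial_subset _ _).trans ?_
  exact Finsupp.support_single_subset

lemma sep_vars_smul_subset {K : Type} [Field K] [Algebra K R]
    (c : K) (p : MvPolynomial (DVar n M) R) : (c • p).vars ⊆ p.vars := by
  intro w hw
  rcases (mem_vars w).1 hw with ⟨d, hd, hwd⟩
  refine (mem_vars w).2 ⟨d, ?_, hwd⟩
  exact MvPolynomial.support_smul hd

/-- A monomial-based induction principle relative to a set of variables. -/
lemma sep_monomial_induction (S : Set (DVar n M)) (P : MvPolynomial (DVar n M) R → Prop)
    (hC : ∀ r : R, P (C r))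
    (hadd : ∀ p q, P p → P q → P (p + q))
    (hX : ∀ (t : MvPolynomial (DVar n M) R) (v : DVar n M),
      ↑t.vars ⊆ S → v ∈ S → P t → P (t * X v)) :
    ∀ h : MvPolynomial (DVar n M) R, ↑h.vars ⊆ S → P h := by
  have hmono : ∀ (N : ℕ) (d : (DVar n M) →₀ ℕ) (r : R),
      (d.sum fun _ e => e) ≤ N → ↑d.support ⊆ S → P (monomial d r) := by
    intro N
    induction N with
    | zero =>
      intro d r hd hS
      have hd0 : d = 0 := by
        ext a
        by_contra ha
        have h1 : 1 ≤ d a := Nat.one_le_iff_ne_zero.2 ha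
        have : d a ≤ d.sum fun _ e => e := by
          refine Finset.single_le_sum (f := fun a => d a) (fun _ _ => Nat.zero_le _) ?_
          exact Finsupp.mem_support_iff.2 ha
        omega
      subst hd0
      rw [monomial_zero']
      exact hC r
    | succ N ih =>
      intro d r hd hS
      by_cases h0 : d = 0
      · subst h0; rw [monomial_zero']; exact hC r
      · obtain ⟨v, hv⟩ := Finsupp.support_nonempty_iff.mpr h0
        have hvd : 1 ≤ d v := Nat.one_le_iff_ne_zero.2 (Finsupp.mem_support_iff.1 hv)
        set d' := d - Finsupp.single v 1 with hd'def
        have hsplit : d' + Finsupp.single v 1 = d := by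
          ext a
          by_cases hav : a = v
          · subst hav
            simp [hd'def, Finsupp.single_apply, Nat.sub_add_cancel hvd]
          · simp [hd'def, Finsupp.single_apply, Ne.symm hav]
        have hsum : (d'.sum fun _ e => e) + 1 = d.sum fun _ e => e := by
          conv_rhs => rw [← hsplit]
          rw [Finsupp.sum_add_index' (fun _ => rfl) (fun _ _ _ => rfl)]
          simp [Finsupp.sum_single_index]
        have hsup' : ↑d'.support ⊆ S := by
          refine Set.Subset.trans ?_ hS
          exact_mod_cast Finsupp.support_tsub
        have hP' := ih d' r (by omega) hsup'
        have hmul : monomial d r = monomial d' r * X v := by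
          have : (X v : MvPolynomial (DVar n M) R) = monomial (Finsupp.single v 1) 1 := rfl
          rw [this, monomial_mul, mul_one, hsplit]
        rw [hmul]
        exact hX _ v ((Set.Subset.trans (by exact_mod_cast sep_vars_monomial_subset d' r) hsup'))
          (hS hv) hP'
  intro h hS
  have hrw := as_sum h
  rw [hrw]
  refine Finset.sum_induction _ P hadd (by simpa using hC 0) ?_
  intro d hd
  exact hmono _ d _ le_rfl (fun w hw => hS ((mem_vars w).2 ⟨d, hd, hw⟩))

variable {K : Type} [Field K] [Algebra K R]

lemma sep_delta_zero (op : DStarOps K (MvPolynomial (DVar n M) R) M) (l : Fin M) :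
    op.δ l 0 = 0 := by
  have h := op.map_add l 0 0
  rw [add_zero] at h
  exact (right_eq_add.1 h)

/-- Every variable of `δ l h` is a one-step shift, by an operator of rank `≤ ν l`,
of a variable of `h`. -/
lemma sep_vars_delta (op : DStarOps K (MvPolynomial (DVar n M) R) M)
    (hvar : ∀ (k : Fin M) (u : DVar n M),
      op.δ k (X u) = X (shiftVar u (Pi.single k 1)))
    (hconst : ∀ (k : Fin M) (r : R), ∃ r' : R, op.δ k (C r) = C r') :
    ∀ (l : Fin M) (S : Set (DVar n M)) (h : MvPolynomial (DVar n M) R),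
      ↑h.vars ⊆ S → ∀ v ∈ (op.δ l h).vars,
        ∃ w ∈ S, ∃ m : Fin M, op.ν m ≤ op.ν l ∧ v = shiftVar w (Pi.single m 1) := by
  suffices H : ∀ (N : ℕ) (l : Fin M), op.ν l ≤ N →
      ∀ (S : Set (DVar n M)) (h : MvPolynomial (DVar n M) R),
      ↑h.vars ⊆ S → ∀ v ∈ (op.δ l h).vars,
        ∃ w ∈ S, ∃ m : Fin M, op.ν m ≤ op.ν l ∧ v = shiftVar w (Pi.single m 1) by
    exact fun l => H (op.ν l) l le_rfl
  intro N
  induction N with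
  | zero =>
    intro l hl S
    -- ν l = 0, so l ∈ σset
    have hlσ : l ∈ op.σset := by
      by_contra hc
      have := op.nu_delta l hc
      omega
    refine sep_monomial_induction S
      (fun h => ∀ v ∈ (op.δ l h).vars,
        ∃ w ∈ S, ∃ m : Fin M, op.ν m ≤ op.ν l ∧ v = shiftVar w (Pi.single m 1)) ?_ ?_ ?_
    · intro r v hv
      obtain ⟨r', hr'⟩ := hconst l r
      rw [hr', vars_C] at hv
      exact absurd hv (Finset.notMem_empty v)
    · intro p q hp hq v hv
      rw [op.map_add] at hv
      rcases Finset.mem_union.1 (vars_add_subset _ _ hv) with h | h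
      · exact hp v h
      · exact hq v h
    · intro t u ht hu hP v hv
      rw [op.sigma_mul l hlσ t (X u), hvar] at hv
      rcases Finset.mem_union.1 (vars_mul _ _ hv) with h | h
      · exact hP v h
      · have := sep_vars_X_subset _ h
        rw [Finset.mem_singleton] at this
        exact ⟨u, hu, l, le_rfl, this⟩
  | succ N ih =>
    intro l hl S
    by_cases hlN : op.ν l ≤ N
    · exact ih l hlN S
    have hlδ : l ∉ op.σset := by
      intro hc
      have := op.nu_sigma l hc
      omega
    have hν1 : 1 ≤ op.ν l := op.nu_delta l hlδ
    have hνf : op.ν (op.fac l) = 0 := op.nu_sigma _ (op.fac_mem l)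
    refine sep_monomial_induction S
      (fun h => ∀ v ∈ (op.δ l h).vars,
        ∃ w ∈ S, ∃ m : Fin M, op.ν m ≤ op.ν l ∧ v = shiftVar w (Pi.single m 1)) ?_ ?_ ?_
    · intro r v hv
      obtain ⟨r', hr'⟩ := hconst l r
      rw [hr', vars_C] at hv
      exact absurd hv (Finset.notMem_empty v)
    · intro p q hp hq v hv
      rw [op.map_add] at hv
      rcases Finset.mem_union.1 (vars_add_subset _ _ hv) with h | h
      · exact hp v h
      · exact hq v h
    · intro t u ht hu hP v hv
      rw [op.prod_rule l hlδ t (X u), hvar, hvar] at hv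
      rcases Finset.mem_union.1 (vars_add_subset _ _ hv) with h1 | hsum
      · rcases Finset.mem_union.1 (vars_add_subset _ _ h1) with h2 | h3
        · -- δ l t * X (shift u (fac l))
          rcases Finset.mem_union.1 (vars_mul _ _ h2) with h | h
          · exact hP v h
          · have := sep_vars_X_subset _ h
            rw [Finset.mem_singleton] at this
            exact ⟨u, hu, op.fac l, by omega, this⟩
        · -- δ (fac l) t * X (shift u l)
          rcases Finset.mem_union.1 (vars_mul _ _ h3) with h | h
          · obtain ⟨w, hw, m, hm, hvm⟩ := ih (op.fac l) (by omega) S t ht v h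
            exact ⟨w, hw, m, by omega, hvm⟩
          · have := sep_vars_X_subset _ h
            rw [Finset.mem_singleton] at this
            exact ⟨u, hu, l, le_rfl, this⟩
      · -- the twisted sum
        obtain ⟨pq, hpq, hvpq⟩ := Finset.mem_biUnion.1 (vars_sum_subset _ _ hsum)
        obtain ⟨-, hp, hq, -, -, hνpq⟩ :
            pq ∈ Finset.univ ∧ pq.1 ∉ op.σset ∧ pq.2 ∉ op.σset ∧ op.fac pq.1 = op.fac l ∧
              op.fac pq.2 = op.fac l ∧ op.ν pq.1 + op.ν pq.2 ≤ op.ν l :=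
          Finset.mem_filter.1 hpq
        have hνp1 : 1 ≤ op.ν pq.1 := op.nu_delta _ hp
        have hνq1 : 1 ≤ op.ν pq.2 := op.nu_delta _ hq
        have hvpq' := sep_vars_smul_subset _ _ hvpq
        rw [hvar] at hvpq'
        rcases Finset.mem_union.1 (vars_mul _ _ hvpq') with h | h
        · obtain ⟨w, hw, m, hm, hvm⟩ := ih pq.1 (by omega) S t ht v h
          exact ⟨w, hw, m, by omega, hvm⟩
        · have := sep_vars_X_subset _ h
          rw [Finset.mem_singleton] at this
          exact ⟨u, hu, pq.2, by omega, this⟩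

end SepAux

/-- For `f` a nonconstant `D*`-polynomial with leader `u_f` and
separant `s_f`, and `δ_{i,j}` a derivation-type operator (with associated endomorphism
`σᵢ`), every variable of `δ_{i,j}(f) − σᵢ(s_f)·δ_{i,j}(u_f)` is strictly below
`δ_{i,j}(u_f)` in the ranking; i.e. `rk(δ_{i,j}(f) − σᵢ(s_f)·δ_{i,j}(u_f)) <
rk(δ_{i,j}(u_f))`. -/
theorem separant_rank_lemma {K R : Type} [Field K] [CommRing R] [Algebra K R]
    {n M : ℕ} (op : DStarOps K (MvPolynomial (DVar n M) R) M)
    (hvar : ∀ (k : Fin M) (u : DVar n M),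
      op.δ k (X u) = X (shiftVar u (Pi.single k 1)))
    (hconst : ∀ (k : Fin M) (r : R), ∃ r' : R, op.δ k (C r) = C r')
    (lt : DVar n M → DVar n M → Prop)
    (hrank : IsRanking lt op.σset op.ν)
    (f : MvPolynomial (DVar n M) R) (hf : ¬ IsConst f)
    (uf : DVar n M) (hlead : IsLeader lt f uf)
    (k : Fin M) (hk : k ∉ op.σset) :
    ∀ v ∈ (op.δ k f -
        op.δ (op.fac k) (pderiv uf f) * X (shiftVar uf (Pi.single k 1))).vars,
      lt v (shiftVar uf (Pi.single k 1)) := by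
  classical
  set f' := op.fac k with hf'
  set ustar := shiftVar uf (Pi.single k 1) with hustar
  have hf'σ : f' ∈ op.σset := op.fac_mem k
  have hνf : op.ν f' = 0 := op.nu_sigma _ hf'σ
  have hνk : 1 ≤ op.ν k := op.nu_delta k hk
  set S : Set (DVar n M) := {v | lt v uf ∨ v = uf} with hS
  -- any strict-rank-below shift lies below ustar
  have hlow : ∀ w ∈ S, ∀ m : Fin M, op.ν m < op.ν k →
      lt (shiftVar w (Pi.single m 1)) ustar := by
    intro w hw m hm
    rcases hw with h1 | h2
    · exact hrank.trans _ _ _ (hrank.mono w uf m h1) (hrank.op_ord uf m k hm)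
    · subst h2; exact hrank.op_ord w m k hm
  have hfS : ↑f.vars ⊆ S := by
    intro v hv
    by_cases hvu : v = uf
    · exact Or.inr hvu
    · exact Or.inl (hlead.2 v hv hvu)
  have hδzero := sep_delta_zero op
  -- main induction
  have main : ∀ h : MvPolynomial (DVar n M) R, ↑h.vars ⊆ S →
      ∀ v ∈ (op.δ k h - op.δ f' (pderiv uf h) * X ustar).vars, lt v ustar := by
    refine sep_monomial_induction S
      (fun h => ∀ v ∈ (op.δ k h - op.δ f' (pderiv uf h) * X ustar).vars, lt v ustar)
      ?_ ?_ ?_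
    · intro r v hv
      obtain ⟨r', hr'⟩ := hconst k r
      rw [pderiv_C, hδzero, zero_mul, sub_zero, hr', vars_C] at hv
      exact absurd hv (Finset.notMem_empty v)
    · intro p q hp hq v hv
      have heq : op.δ k (p + q) - op.δ f' (pderiv uf (p + q)) * X ustar =
          (op.δ k p - op.δ f' (pderiv uf p) * X ustar) +
          (op.δ k q - op.δ f' (pderiv uf q) * X ustar) := by
        rw [op.map_add k, map_add (pderiv uf), op.map_add f']
        ring
      rw [heq] at hv
      rcases Finset.mem_union.1 (vars_add_subset _ _ hv) with h | h
      · exact hp v h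
      · exact hq v h
    · intro t v ht hv hP
      have hδf' : ∀ w ∈ (op.δ f' t).vars, lt w ustar := by
        intro w hw
        obtain ⟨w', hw', m, hm, hwm⟩ := sep_vars_delta op hvar hconst f' S t ht w hw
        subst hwm
        exact hlow w' hw' m (by omega)
      have hc : op.δ f' (pderiv uf (X v)) =
          (if uf = v then (1 : MvPolynomial (DVar n M) R) else 0) := by
        by_cases huv : uf = v
        · subst huv
          rw [pderiv_X_self, if_pos rfl, op.sigma_one f' hf'σ]
        · rw [pderiv_X_of_ne (fun h => huv h.symm), if_neg huv, hδzero]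
      have hEq : op.δ k (t * X v) - op.δ f' (pderiv uf (t * X v)) * X ustar =
          (op.δ k t - op.δ f' (pderiv uf t) * X ustar) * X (shiftVar v (Pi.single f' 1))
          + op.δ f' t * (X (shiftVar v (Pi.single k 1)) -
              (if uf = v then (1 : MvPolynomial (DVar n M) R) else 0) * X ustar)
          + ∑ pq ∈ Finset.univ.filter
              (fun pq : Fin M × Fin M =>
                pq.1 ∉ op.σset ∧ pq.2 ∉ op.σset ∧ op.fac pq.1 = op.fac k ∧
                  op.fac pq.2 = op.fac k ∧ op.ν pq.1 + op.ν pq.2 ≤ op.ν k),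
              op.α k pq.1 pq.2 • (op.δ pq.1 t * op.δ pq.2 (X v)) := by
        rw [op.prod_rule k hk t (X v), pderiv_mul, op.map_add f',
          op.sigma_mul f' hf'σ (pderiv uf t) (X v), op.sigma_mul f' hf'σ t (pderiv uf (X v)),
          hc, hvar, hvar]
        ring
      intro w hw
      rw [hEq] at hw
      rcases Finset.mem_union.1 (vars_add_subset _ _ hw) with h1 | hsum
      · rcases Finset.mem_union.1 (vars_add_subset _ _ h1) with h2 | h3
        · rcases Finset.mem_union.1 (vars_mul _ _ h2) with h | h
          · exact hP w h
          · have := sep_vars_X_subset _ h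
            rw [Finset.mem_singleton] at this
            subst this
            exact hlow v hv f' (by omega)
        · -- middle term
          by_cases huv : uf = v
          · subst huv
            rw [if_pos rfl, one_mul, ← hustar, sub_self, mul_zero, vars_0] at h3
            exact absurd h3 (Finset.notMem_empty w)
          · rw [if_neg huv, zero_mul, sub_zero] at h3
            rcases Finset.mem_union.1 (vars_mul _ _ h3) with h | h
            · exact hδf' w h
            · have := sep_vars_X_subset _ h
              rw [Finset.mem_singleton] at this
              subst this
              rcases hv with h1 | h2
              · exact hrank.mono v uf k h1
              · exact absurd h2.symm huv
      · obtain ⟨pq, hpq, hwpq⟩ := Finset.mem_biUnion.1 (vars_sum_subset _ _ hsum)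
        obtain ⟨-, hp, hq, -, -, hνpq⟩ :
            pq ∈ Finset.univ ∧ pq.1 ∉ op.σset ∧ pq.2 ∉ op.σset ∧ op.fac pq.1 = op.fac k ∧
              op.fac pq.2 = op.fac k ∧ op.ν pq.1 + op.ν pq.2 ≤ op.ν k :=
          Finset.mem_filter.1 hpq
        have hνp1 : 1 ≤ op.ν pq.1 := op.nu_delta _ hp
        have hνq1 : 1 ≤ op.ν pq.2 := op.nu_delta _ hq
        have hwpq' := sep_vars_smul_subset _ _ hwpq
        rw [hvar] at hwpq'
        rcases Finset.mem_union.1 (vars_mul _ _ hwpq') with h | h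
        · obtain ⟨w', hw', m, hm, hwm⟩ := sep_vars_delta op hvar hconst pq.1 S t ht w h
          subst hwm
          exact hlow w' hw' m (by omega)
        · have := sep_vars_X_subset _ h
          rw [Finset.mem_singleton] at this
          subst this
          exact hlow v hv pq.2 (by omega)
  exact main f hfS
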